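/- Let S be a finite set, r, r_1, …, r_q nonnegative integers, and H_1, …, H_q subsets of S with |S| ≥ r, satisfying |H_i ∩ H_j| ≤ r_i + r_j − r for all 1 ≤ i < j ≤ q and |S \ H_i| + r_i ≥ r for all i. Then the family I = {X ⊆ S : |X| ≤ r and |X ∩ H_i| ≤ r_i for all i} is the family of independent sets of a matroid of rank r. -/

import Mathlib

/-- If `|Hᵢ ∩ Hⱼ| ≤ rᵢ + rⱼ - r` (H1) and `|S \ Hᵢ| + rᵢ ≥ r` (H2), then
`{X ⊆ S : |X| ≤ r, |X ∩ Hᵢ| ≤ rᵢ}` is the independence family of a rank-`r` matroid. -/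
theorem elementary_split_is_matroid {α : Type*} (S : Set α) (hS : S.Finite)
    (r q : ℕ) (H : Fin q → Set α) (rr : Fin q → ℕ)
    (hHS : ∀ i, H i ⊆ S) (hSr : r ≤ S.ncard)
    (h1 : ∀ i j : Fin q, i < j → (H i ∩ H j).ncard + r ≤ rr i + rr j)
    (h2 : ∀ i : Fin q, r ≤ (S \ H i).ncard + rr i) :
    ∃ M : Matroid α, M.E = S ∧
      (∀ X : Set α, M.Indep X ↔ X ⊆ S ∧ X.ncard ≤ r ∧ ∀ i, (X ∩ H i).ncard ≤ rr i) ∧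
      (∀ B : Set α, M.IsBase B → B.ncard = r) := by
  classical
  set Ind : Set α → Prop :=
    fun X => X ⊆ S ∧ X.ncard ≤ r ∧ ∀ i, (X ∩ H i).ncard ≤ rr i with hIndDef
  -- no two distinct tight indices for a small independent set
  have key : ∀ (I : Set α), I ⊆ S → I.ncard < r →
      ∀ i j : Fin q, i ≠ j → rr i ≤ (I ∩ H i).ncard → rr j ≤ (I ∩ H j).ncard → False := by
    have main : ∀ i j : Fin q, i < j → ∀ I : Set α, I ⊆ S → I.ncard < r →
        rr i ≤ (I ∩ H i).ncard → rr j ≤ (I ∩ H j).ncard → False := by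
      intro i j hij I hIS hIr hi hj
      have hIfin : I.Finite := hS.subset hIS
      have hfin1 : (I ∩ H i).Finite := hIfin.subset Set.inter_subset_left
      have hfin2 : (I ∩ H j).Finite := hIfin.subset Set.inter_subset_left
      have hie := Set.ncard_union_add_ncard_inter (I ∩ H i) (I ∩ H j) hfin1 hfin2
      have hu : ((I ∩ H i) ∪ (I ∩ H j)).ncard ≤ I.ncard := by
        apply Set.ncard_le_ncard _ hIfin
        exact Set.union_subset Set.inter_subset_left Set.inter_subset_left
      have hHfin : (H i ∩ H j).Finite := hS.subset (Set.inter_subset_left.trans (hHS i))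
      have hv : ((I ∩ H i) ∩ (I ∩ H j)).ncard ≤ (H i ∩ H j).ncard :=
        Set.ncard_le_ncard (fun x hx => ⟨hx.1.2, hx.2.2⟩) hHfin
      have := h1 i j hij
      omega
    intro I hIS hIr i j hne hi hj
    rcases lt_or_gt_of_ne hne with h | h
    · exact main i j h I hIS hIr hi hj
    · exact main j i h I hIS hIr hj hi
  -- blocking lemma
  have block : ∀ (I : Set α) (e : α), Ind I → I.ncard < r → e ∈ S → e ∉ I →
      ¬ Ind (insert e I) → ∃ i : Fin q, e ∈ H i ∧ (I ∩ H i).ncard = rr i := by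
    intro I e hI hIr heS heI hne
    have hIfin : I.Finite := hS.subset hI.1
    have hsub : insert e I ⊆ S := Set.insert_subset heS hI.1
    have hcard : (insert e I).ncard = I.ncard + 1 := Set.ncard_insert_of_notMem heI hIfin
    rw [hIndDef] at hne
    simp only [not_and, not_forall, not_le] at hne
    obtain ⟨i, hi⟩ := hne hsub (by omega)
    by_cases heH : e ∈ H i
    · refine ⟨i, heH, ?_⟩
      rw [Set.insert_inter_of_mem heH] at hi
      have := Set.ncard_insert_le e (I ∩ H i)
      have := hI.2.2 i
      omega
    · exfalso
      rw [Set.insert_inter_of_notMem heH] at hi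
      exact absurd (hI.2.2 i) (by omega)
  refine ⟨(IndepMatroid.ofFinite hS Ind ?_ ?_ ?_ ?_).matroid, rfl, fun X => Iff.rfl, ?_⟩
  · exact ⟨Set.empty_subset _, by simp, fun i => by simp⟩
  · -- subset closed
    intro I J hJ hIJ
    have hJfin : J.Finite := hS.subset hJ.1
    refine ⟨hIJ.trans hJ.1, le_trans (Set.ncard_le_ncard hIJ hJfin) hJ.2.1, fun i => ?_⟩
    exact le_trans (Set.ncard_le_ncard (Set.inter_subset_inter_left _ hIJ)
      (hJfin.subset Set.inter_subset_left)) (hJ.2.2 i)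
  · -- augmentation
    intro I J hI hJ hlt
    by_contra hcon
    push_neg at hcon
    have hIfin : I.Finite := hS.subset hI.1
    have hJfin : J.Finite := hS.subset hJ.1
    have hIr : I.ncard < r := lt_of_lt_of_le hlt hJ.2.1
    -- every element of J \ I has a tight index
    have tight : ∀ e ∈ J \ I, ∃ i : Fin q, e ∈ H i ∧ (I ∩ H i).ncard = rr i := by
      intro e he
      exact block I e hI hIr (hJ.1 he.1) he.2 (hcon e he.1 he.2)
    -- J \ I nonempty
    have hne : (J \ I).Nonempty := by
      by_contra h
      rw [Set.not_nonempty_iff_eq_empty, Set.diff_eq_empty] at h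
      exact absurd (Set.ncard_le_ncard h hIfin) (by omega)
    obtain ⟨e0, he0⟩ := hne
    obtain ⟨i0, hi0H, hi0t⟩ := tight e0 he0
    -- all of J \ I lies in H i0
    have hJI : J \ I ⊆ H i0 := by
      intro e he
      obtain ⟨i, hiH, hit⟩ := tight e he
      by_cases h : i = i0
      · exact h ▸ hiH
      · exact absurd (key I hI.1 hIr i i0 h hit.ge hi0t.ge) not_false
    -- counting contradiction
    have hd1 : (I ∩ J).ncard + (I \ J).ncard = I.ncard :=
      Set.ncard_inter_add_ncard_diff_eq_ncard I J hIfin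
    have hd2 : (J ∩ I).ncard + (J \ I).ncard = J.ncard :=
      Set.ncard_inter_add_ncard_diff_eq_ncard J I hJfin
    have hcomm : (I ∩ J).ncard = (J ∩ I).ncard := by rw [Set.inter_comm]
    have hdiff : (I \ J).ncard < (J \ I).ncard := by omega
    set X := I ∩ H i0 with hX
    set Y := J ∩ H i0 with hY
    have hXfin : X.Finite := hIfin.subset Set.inter_subset_left
    have hYfin : Y.Finite := hJfin.subset Set.inter_subset_left
    have hXd : (X ∩ J).ncard + (X \ J).ncard = X.ncard :=
      Set.ncard_inter_add_ncard_diff_eq_ncard X J hXfin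
    have hYd : (Y ∩ I).ncard + (Y \ I).ncard = Y.ncard :=
      Set.ncard_inter_add_ncard_diff_eq_ncard Y I hYfin
    have hYle : Y.ncard ≤ rr i0 := hJ.2.2 i0
    have hYdiff : Y \ I = J \ I := by
      apply Set.Subset.antisymm
      · intro x hx; exact ⟨hx.1.1, hx.2⟩
      · intro x hx; exact ⟨⟨hx.1, hJI hx⟩, hx.2⟩
    have hXJ : X ∩ J = Y ∩ I := by
      ext x; constructor
      · rintro ⟨⟨h1, h2⟩, h3⟩; exact ⟨⟨h3, h2⟩, h1⟩
      · rintro ⟨⟨h1, h2⟩, h3⟩; exact ⟨⟨h3, h2⟩, h1⟩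
    have hXdJ : (X \ J).ncard ≤ (I \ J).ncard := by
      apply Set.ncard_le_ncard _ (hIfin.subset Set.diff_subset)
      intro x hx; exact ⟨hx.1.1, hx.2⟩
    rw [hYdiff] at hYd
    rw [hXJ] at hXd
    omega
  · exact fun I hI => hI.1
  · -- bases have cardinality r
    intro B hB
    rw [Matroid.isBase_iff_maximal_indep] at hB
    obtain ⟨hBind', hBmax'⟩ := hB
    have hBind : Ind B := hBind'
    have hBmax : ∀ ⦃y : Set α⦄, Ind y → B ⊆ y → y ⊆ B := fun y hy hBy => hBmax' hy hBy
    have hBfin : B.Finite := hS.subset hBind.1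
    have hBle : B.ncard ≤ r := hBind.2.1
    by_contra hneq
    have hBr : B.ncard < r := lt_of_le_of_ne hBle hneq
    -- S \ B is nonempty
    have hSB : (S \ B).Nonempty := by
      by_contra h
      rw [Set.not_nonempty_iff_eq_empty, Set.diff_eq_empty] at h
      exact absurd (Set.ncard_le_ncard h hBfin) (by omega)
    have tight : ∀ e ∈ S \ B, ∃ i : Fin q, e ∈ H i ∧ (B ∩ H i).ncard = rr i := by
      intro e he
      apply block B e hBind hBr he.1 he.2
      intro hind
      have := hBmax hind (Set.subset_insert e B)
      exact he.2 (this (Set.mem_insert e B))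
    obtain ⟨e0, he0⟩ := hSB
    obtain ⟨i0, hi0H, hi0t⟩ := tight e0 he0
    have hSBsub : S \ B ⊆ H i0 := by
      intro e he
      obtain ⟨i, hiH, hit⟩ := tight e he
      by_cases h : i = i0
      · exact h ▸ hiH
      · exact absurd (key B hBind.1 hBr i i0 h hit.ge hi0t.ge) not_false
    have hsub : S \ H i0 ⊆ B \ H i0 := by
      intro x hx
      refine ⟨?_, hx.2⟩
      by_contra hxB
      exact hx.2 (hSBsub ⟨hx.1, hxB⟩)
    have h2' := h2 i0
    have hle : (S \ H i0).ncard ≤ (B \ H i0).ncard :=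
      Set.ncard_le_ncard hsub (hBfin.subset Set.diff_subset)
    have hBd : (B ∩ H i0).ncard + (B \ H i0).ncard = B.ncard :=
      Set.ncard_inter_add_ncard_diff_eq_ncard B (H i0) hBfin
    omega
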